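/- Stallings' group S, i.e., the presented group ⟨a,b,c,d,s | [a,c], [a,d], [b,c], [b,d], (a⁻¹sa)(b⁻¹sb)⁻¹, (a⁻¹sa)(c⁻¹sc)⁻¹, (a⁻¹sa)(d⁻¹sd)⁻¹⟩, is isomorphic to B₃, the kernel of the homomorphism F₂ × F₂ × F₂ → ℤ sending each of the six free generators to 1. -/

import Mathlib

/-- `F₂`, the free group on two generators. -/
abbrev F2 : Type := FreeGroup (Fin 2)

/-- The free group on the five generators `a, b, c, d, s`. -/
abbrev F5 : Type := FreeGroup (Fin 5)

open scoped commutatorElement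

/-- Relators of Stallings' group: `[a,c], [a,d], [b,c], [b,d]`,
`(a⁻¹sa)(b⁻¹sb)⁻¹, (a⁻¹sa)(c⁻¹sc)⁻¹, (a⁻¹sa)(d⁻¹sd)⁻¹`, where `a, b, c, d, s` are the
generators `0, 1, 2, 3, 4` respectively. -/
def stallingsRels : Set F5 :=
  {⁅FreeGroup.of (0 : Fin 5), FreeGroup.of 2⁆, ⁅FreeGroup.of (0 : Fin 5), FreeGroup.of 3⁆,
    ⁅FreeGroup.of (1 : Fin 5), FreeGroup.of 2⁆, ⁅FreeGroup.of (1 : Fin 5), FreeGroup.of 3⁆,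
    ((FreeGroup.of 0)⁻¹ * FreeGroup.of 4 * FreeGroup.of 0) *
      ((FreeGroup.of 1)⁻¹ * FreeGroup.of 4 * FreeGroup.of 1)⁻¹,
    ((FreeGroup.of 0)⁻¹ * FreeGroup.of 4 * FreeGroup.of 0) *
      ((FreeGroup.of 2)⁻¹ * FreeGroup.of 4 * FreeGroup.of 2)⁻¹,
    ((FreeGroup.of 0)⁻¹ * FreeGroup.of 4 * FreeGroup.of 0) *
      ((FreeGroup.of 3)⁻¹ * FreeGroup.of 4 * FreeGroup.of 3)⁻¹}

namespace StallingsAux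

/-! ### Generic group-theoretic helper lemmas -/

section helpers
variable {G : Type*} [Group G]

lemma conj_swap {g h : G} (hc : Commute g h) (x : G) :
    g⁻¹ * (h⁻¹ * x * h) * g = h⁻¹ * (g⁻¹ * x * g) * h := by
  calc g⁻¹ * (h⁻¹ * x * h) * g = (h * g)⁻¹ * x * (h * g) := by group
  _ = (g * h)⁻¹ * x * (g * h) := by rw [hc.eq]
  _ = h⁻¹ * (g⁻¹ * x * g) * h := by group

lemma conj_swap' {g h : G} (hc : Commute g h) (x : G) :
    g * (h * x * h⁻¹) * g⁻¹ = h * (g * x * g⁻¹) * h⁻¹ := by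
  calc g * (h * x * h⁻¹) * g⁻¹ = (g * h) * x * (g * h)⁻¹ := by group
  _ = (h * g) * x * (h * g)⁻¹ := by rw [hc.eq]
  _ = h * (g * x * g⁻¹) * h⁻¹ := by group

variable {a b c d s : G}

lemma L1 (hac : Commute a c) (hbc : Commute b c)
    (h5 : a⁻¹ * s * a = b⁻¹ * s * b) (h6 : a⁻¹ * s * a = c⁻¹ * s * c) :
    a⁻¹ * (a⁻¹ * s * a) * a = b⁻¹ * (a⁻¹ * s * a) * b := by
  calc a⁻¹ * (a⁻¹ * s * a) * a = a⁻¹ * (c⁻¹ * s * c) * a := by rw [h6]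
  _ = c⁻¹ * (a⁻¹ * s * a) * c := conj_swap hac s
  _ = c⁻¹ * (b⁻¹ * s * b) * c := by rw [h5]
  _ = b⁻¹ * (c⁻¹ * s * c) * b := conj_swap hbc.symm s
  _ = b⁻¹ * (a⁻¹ * s * a) * b := by rw [h6]

lemma L2 (hac : Commute a c) (h6 : a⁻¹ * s * a = c⁻¹ * s * c) :
    a⁻¹ * (a⁻¹ * s * a) * a = c⁻¹ * (a⁻¹ * s * a) * c := by
  calc a⁻¹ * (a⁻¹ * s * a) * a = a⁻¹ * (c⁻¹ * s * c) * a := by rw [h6]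
  _ = c⁻¹ * (a⁻¹ * s * a) * c := conj_swap hac s

lemma h6c (hac : Commute a c) (h6 : a⁻¹ * s * a = c⁻¹ * s * c) :
    a * s * a⁻¹ = c * s * c⁻¹ := by
  calc a * s * a⁻¹ = a * (c * (c⁻¹ * s * c) * c⁻¹) * a⁻¹ := by group
  _ = a * (c * (a⁻¹ * s * a) * c⁻¹) * a⁻¹ := by rw [h6]
  _ = c * (a * (a⁻¹ * s * a) * a⁻¹) * c⁻¹ := conj_swap' hac _
  _ = c * s * c⁻¹ := by group

lemma h5b (hac : Commute a c) (hbc : Commute b c)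
    (h5 : a⁻¹ * s * a = b⁻¹ * s * b) (h6 : a⁻¹ * s * a = c⁻¹ * s * c) :
    a * s * a⁻¹ = b * s * b⁻¹ := by
  have k6 : (c * a⁻¹) * s = s * (c * a⁻¹) := by
    calc (c * a⁻¹) * s = c * (a⁻¹ * s * a) * a⁻¹ := by group
    _ = c * (c⁻¹ * s * c) * a⁻¹ := by rw [h6]
    _ = s * (c * a⁻¹) := by group
  have h56 : b⁻¹ * s * b = c⁻¹ * s * c := by rw [← h5, h6]
  have kbc : (b * c⁻¹) * s = s * (b * c⁻¹) := by
    calc (b * c⁻¹) * s = b * (c⁻¹ * s * c) * c⁻¹ := by group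
    _ = b * (b⁻¹ * s * b) * c⁻¹ := by rw [← h56]
    _ = s * (b * c⁻¹) := by group
  have e : a⁻¹ * b = (c * a⁻¹) * (b * c⁻¹) := by
    calc a⁻¹ * b = (a⁻¹ * c) * (c⁻¹ * b) := by group
    _ = (c * a⁻¹) * (c⁻¹ * b) := by rw [hac.inv_left.eq]
    _ = (c * a⁻¹) * (b * c⁻¹) := by rw [hbc.symm.inv_left.eq]
  have hv : (a⁻¹ * b) * s = s * (a⁻¹ * b) := by
    rw [e, mul_assoc, kbc, ← mul_assoc, k6, mul_assoc]
  calc a * s * a⁻¹ = a * (s * (a⁻¹ * b)) * b⁻¹ := by group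
  _ = a * ((a⁻¹ * b) * s) * b⁻¹ := by rw [hv]
  _ = b * s * b⁻¹ := by group

lemma M1 (hac : Commute a c) (hbc : Commute b c)
    (h5 : a⁻¹ * s * a = b⁻¹ * s * b) (h6 : a⁻¹ * s * a = c⁻¹ * s * c) :
    a⁻¹ * (a * s * a⁻¹) * a = b⁻¹ * (a * s * a⁻¹) * b := by
  calc a⁻¹ * (a * s * a⁻¹) * a = s := by group
  _ = b⁻¹ * (b * s * b⁻¹) * b := by group
  _ = b⁻¹ * (a * s * a⁻¹) * b := by rw [h5b hac hbc h5 h6]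

lemma M2 (hac : Commute a c) (h6 : a⁻¹ * s * a = c⁻¹ * s * c) :
    a⁻¹ * (a * s * a⁻¹) * a = c⁻¹ * (a * s * a⁻¹) * c := by
  calc a⁻¹ * (a * s * a⁻¹) * a = s := by group
  _ = c⁻¹ * (c * s * c⁻¹) * c := by group
  _ = c⁻¹ * (a * s * a⁻¹) * c := by rw [h6c hac h6]

/-- commuting elements of a group, extended from generators of free groups -/
lemma commute_all (f g : F2 →* G)
    (h : ∀ i j : Fin 2, Commute (f (FreeGroup.of i)) (g (FreeGroup.of j))) :
    ∀ u v : F2, Commute (f u) (g v) := by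
  have step : ∀ (i : Fin 2) (v : F2), Commute (f (FreeGroup.of i)) (g v) := by
    intro i v
    induction v using FreeGroup.induction_on with
    | C1 => simp [Commute.one_right]
    | of x => exact h i x
    | inv_of x hx => rw [map_inv]; exact hx.inv_right
    | mul x y hx hy => rw [map_mul]; exact hx.mul_right hy
  intro u v
  induction u using FreeGroup.induction_on with
  | C1 => simp [Commute.one_left]
  | of x => exact step x v
  | inv_of x hx => rw [map_inv]; exact hx.inv_left
  | mul x y hx hy => rw [map_mul]; exact hx.mul_left hy

end helpers

/-! ### The Stallings presented group -/

abbrev SG := PresentedGroup stallingsRels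

def a : SG := .of 0
def b : SG := .of 1
def c : SG := .of 2
def d : SG := .of 3
def s : SG := .of 4

lemma rel_one {r : F5} (h : r ∈ stallingsRels) :
    PresentedGroup.mk stallingsRels r = 1 :=
  (QuotientGroup.eq_one_iff _).mpr (Subgroup.subset_normalClosure h)

lemma hac : Commute a c := by
  have := rel_one (show ⁅FreeGroup.of (0:Fin 5), FreeGroup.of 2⁆ ∈ stallingsRels by
    simp [stallingsRels])
  rwa [map_commutatorElement, commutatorElement_eq_one_iff_mul_comm] at this
lemma had : Commute a d := by
  have := rel_one (show ⁅FreeGroup.of (0:Fin 5), FreeGroup.of 3⁆ ∈ stallingsRels by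
    simp [stallingsRels])
  rwa [map_commutatorElement, commutatorElement_eq_one_iff_mul_comm] at this
lemma hbc : Commute b c := by
  have := rel_one (show ⁅FreeGroup.of (1:Fin 5), FreeGroup.of 2⁆ ∈ stallingsRels by
    simp [stallingsRels])
  rwa [map_commutatorElement, commutatorElement_eq_one_iff_mul_comm] at this
lemma hbd : Commute b d := by
  have := rel_one (show ⁅FreeGroup.of (1:Fin 5), FreeGroup.of 3⁆ ∈ stallingsRels by
    simp [stallingsRels])
  rwa [map_commutatorElement, commutatorElement_eq_one_iff_mul_comm] at this

lemma h5 : a⁻¹ * s * a = b⁻¹ * s * b := by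
  have := rel_one (show ((FreeGroup.of 0)⁻¹ * FreeGroup.of 4 * FreeGroup.of 0) *
      ((FreeGroup.of 1)⁻¹ * FreeGroup.of 4 * FreeGroup.of 1)⁻¹ ∈ stallingsRels by
    simp [stallingsRels])
  rw [map_mul, map_inv, mul_inv_eq_one] at this
  simp only [map_mul, map_inv] at this
  exact this
lemma h6 : a⁻¹ * s * a = c⁻¹ * s * c := by
  have := rel_one (show ((FreeGroup.of 0)⁻¹ * FreeGroup.of 4 * FreeGroup.of 0) *
      ((FreeGroup.of 2)⁻¹ * FreeGroup.of 4 * FreeGroup.of 2)⁻¹ ∈ stallingsRels by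
    simp [stallingsRels])
  rw [map_mul, map_inv, mul_inv_eq_one] at this
  simp only [map_mul, map_inv] at this
  exact this
lemma h7 : a⁻¹ * s * a = d⁻¹ * s * d := by
  have := rel_one (show ((FreeGroup.of 0)⁻¹ * FreeGroup.of 4 * FreeGroup.of 0) *
      ((FreeGroup.of 3)⁻¹ * FreeGroup.of 4 * FreeGroup.of 3)⁻¹ ∈ stallingsRels by
    simp [stallingsRels])
  rw [map_mul, map_inv, mul_inv_eq_one] at this
  simp only [map_mul, map_inv] at this
  exact this

/-! ### The shift automorphism τ of SG -/

def fτ : Fin 5 → SG := ![a, b, c, d, a⁻¹ * s * a]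
def fτ' : Fin 5 → SG := ![a, b, c, d, a * s * a⁻¹]

lemma fτ_rels : ∀ r ∈ stallingsRels, FreeGroup.lift fτ r = 1 := by
  intro r hr
  simp only [stallingsRels, Set.mem_insert_iff, Set.mem_singleton_iff] at hr
  rcases hr with rfl|rfl|rfl|rfl|rfl|rfl|rfl <;>
    simp only [map_commutatorElement, map_mul, map_inv, FreeGroup.lift_apply_of, fτ,
      Matrix.cons_val_zero, Matrix.cons_val_one, Matrix.head_cons, Matrix.cons_val_two,
      Matrix.tail_cons, Matrix.cons_val_three, Matrix.cons_val_four, Matrix.cons_val_succ,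
      commutatorElement_eq_one_iff_mul_comm, mul_inv_eq_one]
  · exact hac.eq
  · exact had.eq
  · exact hbc.eq
  · exact hbd.eq
  · exact L1 hac hbc h5 h6
  · exact L2 hac h6
  · exact L2 had h7

lemma fτ'_rels : ∀ r ∈ stallingsRels, FreeGroup.lift fτ' r = 1 := by
  intro r hr
  simp only [stallingsRels, Set.mem_insert_iff, Set.mem_singleton_iff] at hr
  rcases hr with rfl|rfl|rfl|rfl|rfl|rfl|rfl <;>
    simp only [map_commutatorElement, map_mul, map_inv, FreeGroup.lift_apply_of, fτ',
      Matrix.cons_val_zero, Matrix.cons_val_one, Matrix.head_cons, Matrix.cons_val_two,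
      Matrix.tail_cons, Matrix.cons_val_three, Matrix.cons_val_four, Matrix.cons_val_succ,
      commutatorElement_eq_one_iff_mul_comm, mul_inv_eq_one]
  · exact hac.eq
  · exact had.eq
  · exact hbc.eq
  · exact hbd.eq
  · exact M1 hac hbc h5 h6
  · exact M2 hac h6
  · exact M2 had h7

def τ : SG →* SG := PresentedGroup.toGroup fτ_rels
def τ' : SG →* SG := PresentedGroup.toGroup fτ'_rels

lemma τ_a : τ a = a := by simp [τ, a, fτ]
lemma τ_b : τ b = b := by simp [τ, b, fτ]
lemma τ_c : τ c = c := by simp [τ, c, fτ]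
lemma τ_d : τ d = d := by simp [τ, d, fτ]
lemma τ_s : τ s = a⁻¹ * s * a := by simp [τ, s, fτ]

lemma τ'_comp_τ : τ'.comp τ = MonoidHom.id SG := by
  ext i
  fin_cases i <;>
    simp [τ, τ', fτ, fτ', map_mul, map_inv, a, b, c, d, s] <;> group

lemma τ_comp_τ' : τ.comp τ' = MonoidHom.id SG := by
  ext i
  fin_cases i <;>
    simp [τ, τ', fτ, fτ', map_mul, map_inv, a, b, c, d, s] <;> group

def τA : MulAut SG := MonoidHom.toMulEquiv τ τ' τ'_comp_τ τ_comp_τ'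

lemma τA_apply (x : SG) : τA x = τ x := rfl

/-! ### Semidirect product SG ⋊ ℤ and the maps -/

def φτ : Multiplicative ℤ →* MulAut SG := zpowersHom (MulAut SG) τA

abbrev SZ := SemidirectProduct SG (Multiplicative ℤ) φτ

def z1 : Multiplicative ℤ := Multiplicative.ofAdd 1

lemma φτ_z1 : φτ z1 = τA := by
  simp [φτ, zpowersHom_apply, z1]

open SemidirectProduct in
lemma inr_z1_mul_inl (m : SG) : (inr z1 : SZ) * inl m = inl (τ m) * inr z1 := by
  have h := SemidirectProduct.inl_aut (φ := φτ) z1 m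
  rw [φτ_z1, τA_apply] at h
  rw [h, mul_assoc, mul_assoc, ← map_mul, inv_mul_cancel, map_one, mul_one]

open SemidirectProduct in
lemma comm_gen {n m : SG} (h : n * τ m = m * τ n) :
    Commute ((inl n : SZ) * inr z1) (inl m * inr z1) := by
  show _ * _ = _ * _
  calc (inl n : SZ) * inr z1 * (inl m * inr z1)
      = inl n * ((inr z1 : SZ) * inl m) * inr z1 := by group
  _ = inl n * (inl (τ m) * inr z1) * inr z1 := by rw [inr_z1_mul_inl]
  _ = inl (n * τ m) * (inr z1 * inr z1) := by rw [map_mul]; group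
  _ = inl (m * τ n) * (inr z1 * inr z1) := by rw [h]
  _ = inl m * (inl (τ n) * inr z1) * inr z1 := by rw [map_mul]; group
  _ = inl m * ((inr z1 : SZ) * inl n) * inr z1 := by rw [inr_z1_mul_inl]
  _ = inl m * inr z1 * (inl n * inr z1) := by group

open SemidirectProduct in
def θ1 : F2 →* SZ := FreeGroup.lift ![inl a * inr z1, inl b * inr z1]
open SemidirectProduct in
def θ2 : F2 →* SZ := FreeGroup.lift ![inl 1 * inr z1, inl s * inr z1]
open SemidirectProduct in
def θ3 : F2 →* SZ := FreeGroup.lift ![inl c * inr z1, inl d * inr z1]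

lemma comm12 : ∀ u v : F2, Commute (θ1 u) (θ2 v) := by
  apply commute_all
  intro i j
  fin_cases i <;> fin_cases j <;>
    simp only [θ1, θ2, FreeGroup.lift_apply_of, Matrix.cons_val_zero, Matrix.cons_val_one,
      Matrix.head_cons, Fin.mk_zero, Fin.mk_one] <;>
    apply comm_gen
  · simp [τ_a]
  · rw [τ_s, τ_a]; group
  · simp [τ_b]
  · rw [τ_s, τ_b, h5]; group

lemma comm13 : ∀ u v : F2, Commute (θ1 u) (θ3 v) := by
  apply commute_all
  intro i j
  fin_cases i <;> fin_cases j <;>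
    simp only [θ1, θ3, FreeGroup.lift_apply_of, Matrix.cons_val_zero, Matrix.cons_val_one,
      Matrix.head_cons, Fin.mk_zero, Fin.mk_one] <;>
    apply comm_gen
  · rw [τ_c, τ_a]; exact hac.eq
  · rw [τ_d, τ_a]; exact had.eq
  · rw [τ_c, τ_b]; exact hbc.eq
  · rw [τ_d, τ_b]; exact hbd.eq

lemma comm23 : ∀ u v : F2, Commute (θ2 u) (θ3 v) := by
  apply commute_all
  intro i j
  fin_cases i <;> fin_cases j <;>
    simp only [θ2, θ3, FreeGroup.lift_apply_of, Matrix.cons_val_zero, Matrix.cons_val_one,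
      Matrix.head_cons, Fin.mk_zero, Fin.mk_one] <;>
    apply comm_gen
  · simp [τ_c]
  · simp [τ_d]
  · rw [τ_c, τ_s, h6]; group
  · rw [τ_d, τ_s, h7]; group

/-! ### The target group T3 = F2 × F2 × F2 -/

abbrev T3 := F2 × F2 × F2

def j1 : F2 →* T3 := MonoidHom.inl F2 (F2 × F2)
def j2 : F2 →* T3 := (MonoidHom.inr F2 (F2 × F2)).comp (MonoidHom.inl F2 F2)
def j3 : F2 →* T3 := (MonoidHom.inr F2 (F2 × F2)).comp (MonoidHom.inr F2 F2)

lemma j1_apply (u : F2) : j1 u = (u, 1, 1) := rfl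
lemma j2_apply (v : F2) : j2 v = (1, v, 1) := rfl
lemma j3_apply (w : F2) : j3 w = (1, 1, w) := rfl

lemma j_decomp (g : T3) : g = j1 g.1 * j2 g.2.1 * j3 g.2.2 := by
  rcases g with ⟨u, v, w⟩
  simp [j1_apply, j2_apply, j3_apply, Prod.ext_iff]

lemma hom_ext3 {M : Type*} [Monoid M] {f g : T3 →* M}
    (e1 : f.comp j1 = g.comp j1) (e2 : f.comp j2 = g.comp j2) (e3 : f.comp j3 = g.comp j3) :
    f = g := by
  ext x
  rw [j_decomp x, map_mul, map_mul, map_mul, map_mul,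
    show f (j1 x.1) = g (j1 x.1) from DFunLike.congr_fun e1 _,
    show f (j2 x.2.1) = g (j2 x.2.1) from DFunLike.congr_fun e2 _,
    show f (j3 x.2.2) = g (j3 x.2.2) from DFunLike.congr_fun e3 _]

/-! ### The homomorphism θ : T3 →* SZ -/

def θ : T3 →* SZ where
  toFun g := θ1 g.1 * θ2 g.2.1 * θ3 g.2.2
  map_one' := by simp
  map_mul' g h := by
    rcases g with ⟨u, v, w⟩; rcases h with ⟨u', v', w'⟩
    show θ1 (u * u') * θ2 (v * v') * θ3 (w * w') = _
    calc θ1 (u * u') * θ2 (v * v') * θ3 (w * w')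
        = θ1 u * θ1 u' * (θ2 v * θ2 v') * (θ3 w * θ3 w') := by
          rw [map_mul, map_mul, map_mul]
    _ = θ1 u * θ2 v * (θ1 u' * θ2 v') * (θ3 w * θ3 w') := by
          rw [(comm12 u' v).mul_mul_mul_comm]
    _ = θ1 u * θ2 v * θ3 w * (θ1 u' * θ2 v' * θ3 w') :=
          ((comm13 u' w).mul_left (comm23 v' w)).mul_mul_mul_comm _ _

@[simp] lemma θ_apply (g : T3) : θ g = θ1 g.1 * θ2 g.2.1 * θ3 g.2.2 := rfl

/-! ### The homomorphism φS : SG →* T3 -/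

def fS : Fin 5 → T3 :=
  ![(.of 0, (.of 0)⁻¹, 1), (.of 1, (.of 0)⁻¹, 1), (1, (.of 0)⁻¹, .of 0),
    (1, (.of 0)⁻¹, .of 1), (1, .of 1 * (.of 0)⁻¹, 1)]

lemma fS_rels : ∀ r ∈ stallingsRels, FreeGroup.lift fS r = 1 := by
  intro r hr
  simp only [stallingsRels, Set.mem_insert_iff, Set.mem_singleton_iff] at hr
  rcases hr with rfl|rfl|rfl|rfl|rfl|rfl|rfl <;>
    simp [commutatorElement_def, fS, Prod.ext_iff] <;> group

def φS : SG →* T3 := PresentedGroup.toGroup fS_rels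

lemma φS_a : φS a = (.of 0, (.of 0)⁻¹, 1) := by simp [φS, a, fS]
lemma φS_b : φS b = (.of 1, (.of 0)⁻¹, 1) := by simp [φS, b, fS]
lemma φS_c : φS c = (1, (.of 0)⁻¹, .of 0) := by simp [φS, c, fS]
lemma φS_d : φS d = (1, (.of 0)⁻¹, .of 1) := by simp [φS, d, fS]
lemma φS_s : φS s = (1, .of 1 * (.of 0)⁻¹, 1) := by simp [φS, s, fS]

/-- the distinguished element of `T3` mapping to `1 : ℤ` -/
def T : T3 := ((1 : F2), FreeGroup.of 0, (1 : F2))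

lemma c1 : ∀ x : SG, φS (τ x) = T * φS x * T⁻¹ := by
  have : φS.comp τ = (MulAut.conj T).toMonoidHom.comp φS := by
    apply PresentedGroup.ext
    intro i
    fin_cases i <;>
      simp [τ_a, τ_b, τ_c, τ_d, τ_s, map_mul, map_inv, MulAut.conj_apply,
        φS_a, φS_b, φS_c, φS_d, φS_s,
        show (PresentedGroup.of (0 : Fin 5) : SG) = a from rfl,
        show (PresentedGroup.of (1 : Fin 5) : SG) = b from rfl,
        show (PresentedGroup.of (2 : Fin 5) : SG) = c from rfl,
        show (PresentedGroup.of (3 : Fin 5) : SG) = d from rfl,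
        show (PresentedGroup.of (4 : Fin 5) : SG) = s from rfl,
        T, Prod.ext_iff] <;> group
  intro x
  exact DFunLike.congr_fun this x

lemma c1' : ∀ x : SG, φS (τA⁻¹ x) = T⁻¹ * φS x * T := by
  intro x
  have h := c1 (τA⁻¹ x)
  have e : τ (τA⁻¹ x) = x := by
    show τA (τA⁻¹ x) = x
    simp
  rw [e] at h
  rw [h]; group

lemma Pconj : ∀ (n : ℤ) (x : SG), φS ((τA ^ n) x) = T ^ n * φS x * (T ^ n)⁻¹ := by
  intro n
  induction n using Int.induction_on with
  | zero => intro x; simp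
  | succ k ih =>
      intro x
      have e : (τA ^ ((k : ℤ) + 1)) x = (τA ^ (k : ℤ)) (τ x) := by
        rw [zpow_add, zpow_one]; rfl
      rw [e, ih, c1]
      group
  | pred k ih =>
      intro x
      have e : (τA ^ (-(k : ℤ) - 1)) x = (τA ^ (-(k : ℤ))) (τA⁻¹ x) := by
        rw [sub_eq_add_neg, zpow_add, zpow_neg_one]; rfl
      rw [e, ih, c1']
      group

lemma hcompat : ∀ g : Multiplicative ℤ,
    φS.comp (φτ g).toMonoidHom =
      (MulAut.conj ((zpowersHom T3 T) g)).toMonoidHom.comp φS := by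
  intro g
  refine MonoidHom.ext fun x => ?_
  simp only [MonoidHom.comp_apply, MulEquiv.coe_toMonoidHom, MulAut.conj_apply,
    φτ, zpowersHom_apply]
  exact Pconj g.toAdd x

def Φ : SZ →* T3 := SemidirectProduct.lift φS (zpowersHom T3 T) hcompat

lemma Φ_apply (x : SZ) : Φ x = φS x.left * T ^ x.right.toAdd := rfl

open SemidirectProduct in
lemma Φθ_id : Φ.comp θ = MonoidHom.id T3 := by
  apply hom_ext3 <;> apply FreeGroup.ext_hom <;> intro i <;> fin_cases i <;>
    simp [θ1, θ2, θ3, j1_apply, j2_apply, j3_apply, Φ_apply, z1, mul_left, mul_right,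
      φS_a, φS_b, φS_c, φS_d, φS_s, T, Prod.ext_iff] <;> group

lemma τ'_a : τ' a = a := by simp [τ', a, fτ']
lemma τ'_b : τ' b = b := by simp [τ', b, fτ']
lemma τ'_c : τ' c = c := by simp [τ', c, fτ']
lemma τ'_d : τ' d = d := by simp [τ', d, fτ']
lemma τ'_s : τ' s = a * s * a⁻¹ := by simp [τ', s, fτ']

@[simp] lemma φτ_z1_apply (x : SG) : φτ z1 x = τ x := by rw [φτ_z1]; rfl
@[simp] lemma φτ_z1inv_apply (x : SG) : φτ z1⁻¹ x = τ' x := by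
  rw [map_inv, φτ_z1]; rfl

@[simp] lemma φτ_z1inv_apply' (x : SG) : (φτ z1)⁻¹ x = τ' x := by
  rw [← map_inv]; exact φτ_z1inv_apply x

end StallingsAux

open StallingsAux SemidirectProduct in
/-- Stallings' group `S` (the presented group above) is isomorphic to `B₃`, the kernel of the
homomorphism `F₂ × F₂ × F₂ → ℤ` sending each of the six free generators to `1`. -/
theorem stmt_14 (ψ : F2 × F2 × F2 →* Multiplicative ℤ)
    (h₁ : ∀ i : Fin 2, ψ (FreeGroup.of i, 1, 1) = Multiplicative.ofAdd 1)
    (h₂ : ∀ i : Fin 2, ψ (1, FreeGroup.of i, 1) = Multiplicative.ofAdd 1)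
    (h₃ : ∀ i : Fin 2, ψ (1, 1, FreeGroup.of i) = Multiplicative.ofAdd 1) :
    Nonempty (PresentedGroup stallingsRels ≃* ψ.ker) := by
  -- the ℤ-component of θ is ψ
  have hψ : (rightHom).comp θ = ψ := by
    apply hom_ext3 <;> apply FreeGroup.ext_hom <;> intro i <;> fin_cases i <;>
      simp [θ1, θ2, θ3, j1_apply, j2_apply, j3_apply, mul_right, z1] <;>
      first
        | exact (h₁ _).symm
        | exact (h₂ _).symm
        | exact (h₃ _).symm
  have key : ∀ g : T3, rightHom (θ g) = ψ g := fun g => DFunLike.congr_fun hψ g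
  have hright : ∀ g : T3, ψ g = 1 → (θ g).right = 1 := by
    intro g hg
    have : rightHom (θ g) = 1 := by rw [key g, hg]
    exact this
  -- ψ computation helpers
  have ψval : ∀ u v w : F2, ψ (u, v, w) = ψ (u, 1, 1) * ψ (1, v, 1) * ψ (1, 1, w) := by
    intro u v w
    rw [show ((u, v, w) : T3) = j1 u * j2 v * j3 w from j_decomp (u, v, w), map_mul, map_mul,
      j1_apply, j2_apply, j3_apply]
  have ψinv2 : ∀ v : F2, ψ (1, v⁻¹, 1) = (ψ (1, v, 1))⁻¹ := by
    intro v
    rw [show ((1, v⁻¹, 1) : T3) = ((1, v, 1) : T3)⁻¹ by simp [Prod.ext_iff], map_inv]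
  have ψmul2 : ∀ v w : F2, ψ (1, v * w, 1) = ψ (1, v, 1) * ψ (1, w, 1) := by
    intro v w
    rw [show ((1, v * w, 1) : T3) = ((1, v, 1) : T3) * ((1, w, 1) : T3) by
      simp [Prod.ext_iff], map_mul]
  have ψ111 : ψ ((1 : F2), (1 : F2), (1 : F2)) = 1 := map_one ψ
  -- φS lands in the kernel of ψ
  have hker : ∀ x : PresentedGroup stallingsRels, φS x ∈ ψ.ker := by
    have hone : ψ.comp φS = 1 := by
      apply PresentedGroup.ext
      intro i
      fin_cases i
      · show ψ (φS a) = 1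
        rw [φS_a, ψval, ψinv2, h₁ 0, h₂ 0, ψ111]
        group
      · show ψ (φS b) = 1
        rw [φS_b, ψval, ψinv2, h₁ 1, h₂ 0, ψ111]
        group
      · show ψ (φS c) = 1
        rw [φS_c, ψval, ψinv2, h₃ 0, h₂ 0, ψ111]
        group
      · show ψ (φS d) = 1
        rw [φS_d, ψval, ψinv2, h₃ 1, h₂ 0, ψ111]
        group
      · show ψ (φS s) = 1
        rw [φS_s, ψval, ψmul2, ψinv2, h₂ 0, h₂ 1, ψ111]
        group
    intro x
    rw [MonoidHom.mem_ker]
    exact DFunLike.congr_fun hone x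
  -- the two homomorphisms
  let φ' : PresentedGroup stallingsRels →* ψ.ker := φS.codRestrict ψ.ker hker
  let χ : ψ.ker →* PresentedGroup stallingsRels :=
    { toFun := fun k => (θ k.1).left
      map_one' := by
        show (θ (1 : T3)).left = 1
        rw [map_one]
        rfl
      map_mul' := fun k l => by
        show (θ (k.1 * l.1)).left = _
        rw [map_mul, mul_left, hright k.1 (MonoidHom.mem_ker.mp k.2), map_one]
        rfl }
  have hleft : χ.comp φ' = MonoidHom.id (PresentedGroup stallingsRels) := by
    apply PresentedGroup.ext
    intro i
    fin_cases i
    · show (θ (φS a)).left = a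
      rw [φS_a]
      show (θ1 (.of 0) * θ2 (.of 0)⁻¹ * θ3 1).left = a
      simp [θ1, θ2, θ3, mul_left, mul_right, inv_left, inv_right, τ'_a, τ'_s, τ_a, τ_s]
    · show (θ (φS b)).left = b
      rw [φS_b]
      show (θ1 (.of 1) * θ2 (.of 0)⁻¹ * θ3 1).left = b
      simp [θ1, θ2, θ3, mul_left, mul_right, inv_left, inv_right]
    · show (θ (φS c)).left = c
      rw [φS_c]
      show (θ1 1 * θ2 (.of 0)⁻¹ * θ3 (.of 0)).left = c
      simp [θ1, θ2, θ3, mul_left, mul_right, inv_left, inv_right, τ'_c,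
          show ∀ x, (φτ z1).symm x = τ' x from φτ_z1inv_apply']
    · show (θ (φS d)).left = d
      rw [φS_d]
      show (θ1 1 * θ2 (.of 0)⁻¹ * θ3 (.of 1)).left = d
      simp [θ1, θ2, θ3, mul_left, mul_right, inv_left, inv_right, τ'_d,
          show ∀ x, (φτ z1).symm x = τ' x from φτ_z1inv_apply']
    · show (θ (φS s)).left = s
      rw [φS_s]
      show (θ1 1 * θ2 (.of 1 * (.of 0)⁻¹) * θ3 1).left = s
      simp [θ1, θ2, θ3, mul_left, mul_right, inv_left, inv_right]
  have hright2 : φ'.comp χ = MonoidHom.id ψ.ker := by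
    refine MonoidHom.ext fun k => ?_
    refine Subtype.ext ?_
    show φS ((θ k.1).left) = k.1
    have hid := DFunLike.congr_fun Φθ_id k.1
    rw [MonoidHom.comp_apply, Φ_apply, hright k.1 (MonoidHom.mem_ker.mp k.2)] at hid
    simpa using hid
  exact ⟨MonoidHom.toMulEquiv φ' χ hleft hright2⟩
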